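/- For d ≥ 1, the functions φ(t,x) = ‖x‖²/2 − d·t and ρ(t,x) = (2π)^{−d/2} exp(−‖x‖²/2) on [0,1] × ℝ^d satisfy the Fokker–Planck equation ∂_t ρ − Δρ − div(ρ ∇φ) = 0. -/

import Mathlib

open scoped BigOperators

/-- Coordinate-wise Laplacian on Euclidean space. -/
noncomputable def lap (d : ℕ) (f : EuclideanSpace ℝ (Fin d) → ℝ)
    (x : EuclideanSpace ℝ (Fin d)) : ℝ :=
  ∑ i, fderiv ℝ (fun y => fderiv ℝ f y (EuclideanSpace.single i 1)) x
    (EuclideanSpace.single i 1)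

/-- Coordinate-wise divergence of a vector field on Euclidean space. -/
noncomputable def dvg (d : ℕ)
    (F : EuclideanSpace ℝ (Fin d) → EuclideanSpace ℝ (Fin d))
    (x : EuclideanSpace ℝ (Fin d)) : ℝ :=
  ∑ i, fderiv ℝ F x (EuclideanSpace.single i 1) i

section Aux

variable {d : ℕ}

local notation "E" => EuclideanSpace ℝ (Fin d)

/-- Derivative of `‖y‖²/2`. -/
lemma hasFDerivAt_normsq_half (x : E) :
    HasFDerivAt (fun y : E => ‖y‖ ^ 2 / 2) (innerSL ℝ x) x := by
  have h0 : HasFDerivAt (fun y : E => (inner ℝ y y : ℝ))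
      ((fderivInnerCLM ℝ (x, x)).comp
        ((ContinuousLinearMap.id ℝ E).prod (ContinuousLinearMap.id ℝ E))) x :=
    (hasFDerivAt_id x).inner ℝ (hasFDerivAt_id x)
  have h1 := h0.mul_const (1/2 : ℝ)
  have hfun : (fun y : E => (inner ℝ y y : ℝ) * (1/2 : ℝ)) = fun y : E => ‖y‖ ^ 2 / 2 := by
    funext y
    rw [real_inner_self_eq_norm_sq]; ring
  rw [hfun] at h1
  refine h1.congr_fderiv ?_
  ext v
  simp only [innerSL_apply_apply, ContinuousLinearMap.smul_apply, ContinuousLinearMap.comp_apply,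
    ContinuousLinearMap.prod_apply, ContinuousLinearMap.id_apply, fderivInnerCLM_apply,
    smul_eq_mul]
  rw [real_inner_comm v x]
  ring

lemma gauss_hasFDerivAt (c : ℝ) (x : E) :
    HasFDerivAt (fun y : E => c * Real.exp (-‖y‖ ^ 2 / 2))
      ((-(c * Real.exp (-‖x‖ ^ 2 / 2))) • innerSL ℝ x) x := by
  have h1 : HasFDerivAt (fun y : E => -‖y‖ ^ 2 / 2) (-(innerSL ℝ x)) x := by
    have := (hasFDerivAt_normsq_half x).neg
    simpa [neg_div, Pi.neg_def] using this
  have h2 := (h1.exp).const_mul c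
  refine h2.congr_fderiv ?_
  ext v
  simp
  ring

end Aux

/-- the explicit pair φ(t,x) = ‖x‖²/2 − d·t,
ρ(t,x) = (2π)^{−d/2}·exp(−‖x‖²/2) satisfies the Fokker–Planck equation
∂ₜρ − Δρ − div(ρ∇φ) = 0 (viscosity ν = 1). -/
theorem stmt7 (d : ℕ) (hd : 1 ≤ d)
    (φ ρ : ℝ → EuclideanSpace ℝ (Fin d) → ℝ)
    (hφ : φ = fun t x => ‖x‖ ^ 2 / 2 - (d : ℝ) * t)
    (hρ : ρ = fun _ x => (2 * Real.pi) ^ (-(d : ℝ) / 2) * Real.exp (-‖x‖ ^ 2 / 2)) :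
    ∀ t ∈ Set.Icc (0 : ℝ) 1, ∀ x : EuclideanSpace ℝ (Fin d),
      deriv (fun s => ρ s x) t - lap d (ρ t) x
        - dvg d (fun y => ρ t y • gradient (φ t) y) x = 0 := by
  intro t _ x
  set c : ℝ := (2 * Real.pi) ^ (-(d : ℝ) / 2) with hc
  set g : EuclideanSpace ℝ (Fin d) → ℝ := fun y => c * Real.exp (-‖y‖ ^ 2 / 2) with hg
  have hρt : ρ t = g := by rw [hρ]
  -- time derivative is zero
  have hderiv : deriv (fun s => ρ s x) t = 0 := by
    rw [hρ]; simp
  -- gradient of φ t is the identity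
  have hgrad : ∀ y : EuclideanSpace ℝ (Fin d), gradient (φ t) y = y := by
    intro y
    have h1 : HasFDerivAt (φ t) (innerSL ℝ y) y := by
      rw [hφ]
      exact (hasFDerivAt_normsq_half y).sub_const _
    have h2 : HasGradientAt (φ t) y y := by
      rw [hasGradientAt_iff_hasFDerivAt]
      exact h1
    exact h2.gradient
  -- first derivative of g
  have hGd : ∀ y : EuclideanSpace ℝ (Fin d), fderiv ℝ g y = (-(g y)) • innerSL ℝ y := fun y =>
    (gauss_hasFDerivAt c y).fderiv
  have hsingle : ∀ i : Fin d, (inner ℝ x (EuclideanSpace.single i (1:ℝ)) : ℝ) = x i := by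
    intro i
    simp [EuclideanSpace.inner_single_right]
  -- Laplacian
  have hlap : lap d (ρ t) x = g x * (∑ i, x i * x i) - (d : ℝ) * g x := by
    rw [hρt, lap]
    have hterm : ∀ i : Fin d,
        fderiv ℝ (fun y => fderiv ℝ g y (EuclideanSpace.single i 1)) x
          (EuclideanSpace.single i 1) = x i * (g x * x i) - g x := by
      intro i
      have hfun : (fun y : EuclideanSpace ℝ (Fin d) => fderiv ℝ g y (EuclideanSpace.single i 1))
          = fun y : EuclideanSpace ℝ (Fin d) => (-(g y)) * (inner ℝ y (EuclideanSpace.single i (1:ℝ)) : ℝ) := by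
        funext y
        rw [hGd y]
        simp
      rw [hfun]
      have hmul : HasFDerivAt
          (fun y : EuclideanSpace ℝ (Fin d) => (-(g y)) * (inner ℝ y (EuclideanSpace.single i (1:ℝ)) : ℝ))
          (((-(g x))) • (innerSL ℝ (EuclideanSpace.single i (1:ℝ)) : EuclideanSpace ℝ (Fin d) →L[ℝ] ℝ)
            + ((inner ℝ x (EuclideanSpace.single i (1:ℝ)) : ℝ)) •
              (-((-(g x)) • innerSL ℝ x)) ) x := by
        have ha : HasFDerivAt (fun y : EuclideanSpace ℝ (Fin d) => -(g y)) (-((-(g x)) • innerSL ℝ x)) x :=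
          (gauss_hasFDerivAt c x).neg
        have hb : HasFDerivAt (fun y : EuclideanSpace ℝ (Fin d) => (inner ℝ y (EuclideanSpace.single i (1:ℝ)) : ℝ))
            (innerSL ℝ (EuclideanSpace.single i (1:ℝ))) x := by
          have := ((hasFDerivAt_id x).inner ℝ
            (hasFDerivAt_const (EuclideanSpace.single i (1:ℝ)) x))
          refine this.congr_fderiv ?_
          ext v
          simp [real_inner_comm]
        have := ha.mul hb
        exact this
      rw [hmul.fderiv]
      have h1 : (inner ℝ (EuclideanSpace.single i (1:ℝ)) (EuclideanSpace.single i (1:ℝ)) : ℝ)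
          = 1 := by simp [EuclideanSpace.inner_single_right]
      simp [hsingle i, h1]
      ring
    rw [Finset.sum_congr rfl (fun i _ => hterm i), Finset.sum_sub_distrib,
      Finset.mul_sum, Finset.sum_const, Finset.card_univ, Fintype.card_fin, nsmul_eq_mul]
    congr 1
    exact Finset.sum_congr rfl fun i _ => by ring
  -- divergence
  have hdvg : dvg d (fun y => ρ t y • gradient (φ t) y) x
      = (d : ℝ) * g x - g x * (∑ i, x i * x i) := by
    have hfun : (fun y => ρ t y • gradient (φ t) y) = fun y : EuclideanSpace ℝ (Fin d) => g y • y := by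
      funext y
      rw [hρt, hgrad y]
    rw [hfun, dvg]
    have hsmul : HasFDerivAt (fun y : EuclideanSpace ℝ (Fin d) => g y • y)
        (g x • (ContinuousLinearMap.id ℝ (EuclideanSpace ℝ (Fin d)))
          + ((-(g x)) • innerSL ℝ x).smulRight x) x :=
      (gauss_hasFDerivAt c x).smul (hasFDerivAt_id x)
    have hterm : ∀ i : Fin d,
        fderiv ℝ (fun y : EuclideanSpace ℝ (Fin d) => g y • y) x (EuclideanSpace.single i 1) i
          = g x - g x * x i * x i := by
      intro i
      rw [hsmul.fderiv]
      have : (g x • (EuclideanSpace.single i (1:ℝ))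
          + ((-(g x)) * (inner ℝ x (EuclideanSpace.single i (1:ℝ)) : ℝ)) • x) i
          = g x - g x * x i * x i := by
        simp [EuclideanSpace.single_apply, hsingle i]
        ring
      simpa using this
    rw [Finset.sum_congr rfl (fun i _ => hterm i), Finset.sum_sub_distrib,
      Finset.mul_sum, Finset.sum_const, Finset.card_univ, Fintype.card_fin, nsmul_eq_mul]
    congr 1
    exact Finset.sum_congr rfl fun i _ => by ring
  rw [hderiv, hlap, hdvg]
  ring
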